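/- Every finitely generated subsemimodule of ℝ_max^n (i.e., a set of the form {Ex : x ∈ ℝ_max^q} for some matrix E ∈ ℝ_max^{n×q}, equivalently the set of max-plus linear combinations of finitely many fixed vectors) is a closed subset of ℝ_max^n. -/

import Mathlib

/-!
Max-plus (tropical) framework.

The max-plus semiring `ℝ_max = ℝ ∪ {-∞}` is modelled as `WithBot ℝ`:
max-plus addition `a ⊕ b = max a b` is the lattice `⊔`, and max-plus
multiplication `a ⊙ b = a + b` is `+` (with `⊥ = -∞` absorbing).
The topology induced by the metric `d(a,b) = |exp a - exp b|` is the
order topology.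
-/

/-- The max-plus semiring `ℝ ∪ {-∞}`. -/
abbrev Rmax : Type := WithBot ℝ

/-- The topology of `ℝ_max` (the order topology, which coincides with the
topology induced by the metric `d(a,b) = |exp a - exp b|`). -/
instance : TopologicalSpace Rmax := Preorder.topology Rmax

instance : OrderTopology Rmax := ⟨rfl⟩

/-- Vectors with entries in a (max-plus-like) semiring `R`. -/
abbrev Vec (R : Type*) (n : ℕ) := Fin n → R

section Defs

variable {R : Type*} [LinearOrder R] [Add R] [OrderBot R]

/-- Max-plus scalar action on a vector: `(λ x)_i = λ ⊙ x_i = λ + x_i`. -/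
def sm {n : ℕ} (lam : R) (x : Vec R n) : Vec R n := fun i => lam + x i

/-- Max-plus matrix-vector product: `(A x)_i = ⊕_k A_{ik} ⊙ x_k = max_k (A_{ik} + x_k)`. -/
def mulVecMP {m n : ℕ} (A : Matrix (Fin m) (Fin n) R) (x : Vec R n) : Vec R m :=
  fun i => Finset.univ.sup fun k => A i k + x k

/-- A subsemimodule (max-plus cone) of `R^n`: a subset stable under
max-plus linear combinations `λ x ⊕ μ y`. -/
def IsSemimodule {n : ℕ} (K : Set (Vec R n)) : Prop :=
  ∀ x ∈ K, ∀ y ∈ K, ∀ lam mu : R, (sm lam x ⊔ sm mu y) ∈ K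

/-- Max-plus scalar action on a pair of vectors. -/
def smP {n : ℕ} (lam : R) (p : Vec R n × Vec R n) : Vec R n × Vec R n :=
  (sm lam p.1, sm lam p.2)

/-- A subsemimodule of `(R^n)²`. -/
def IsPairSemimodule {n : ℕ} (W : Set (Vec R n × Vec R n)) : Prop :=
  ∀ p ∈ W, ∀ q ∈ W, ∀ lam mu : R, (smP lam p ⊔ smP mu q) ∈ W

/-- A congruence on `R^n`: an equivalence relation which is a
subsemimodule of `(R^n)²`. -/
def IsCongruence {n : ℕ} (W : Set (Vec R n × Vec R n)) : Prop :=
  Equivalence (fun x y => (x, y) ∈ W) ∧ IsPairSemimodule W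

/-- The (max-plus) kernel of a matrix: `ker E = {(x,y) : E x = E y}`. -/
def kerM {p n : ℕ} (E : Matrix (Fin p) (Fin n) R) : Set (Vec R n × Vec R n) :=
  {w | mulVecMP E w.1 = mulVecMP E w.2}

/-- The image of a matrix: `Im E = {E x}`. -/
def imM {n q : ℕ} (E : Matrix (Fin n) (Fin q) R) : Set (Vec R n) :=
  {y | ∃ x : Vec R q, y = mulVecMP E x}

/-- `A W = {(A x, A y) : (x,y) ∈ W}` for a set of pairs `W`. -/
def mapCong {n : ℕ} (A : Matrix (Fin n) (Fin n) R) (W : Set (Vec R n × Vec R n)) :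
    Set (Vec R n × Vec R n) :=
  {p | ∃ w ∈ W, p = (mulVecMP A w.1, mulVecMP A w.2)}

/-- `A S = {A x : x ∈ S}`. -/
def mapSet {n : ℕ} (A : Matrix (Fin n) (Fin n) R) (S : Set (Vec R n)) : Set (Vec R n) :=
  {y | ∃ x ∈ S, y = mulVecMP A x}

/-- `A⁻¹ S = {x : A x ∈ S}`. -/
def invSet {n : ℕ} (A : Matrix (Fin n) (Fin n) R) (S : Set (Vec R n)) : Set (Vec R n) :=
  {x | mulVecMP A x ∈ S}

/-- `A⁻¹ U = {(x,y) : (A x, A y) ∈ U}` for a set of pairs `U`. -/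
def invPair {n : ℕ} (A : Matrix (Fin n) (Fin n) R) (U : Set (Vec R n × Vec R n)) :
    Set (Vec R n × Vec R n) :=
  {p | (mulVecMP A p.1, mulVecMP A p.2) ∈ U}

/-- The max-plus sum of two subsets of `R^n`: `X ⊕ Y = {x ⊕ y : x ∈ X, y ∈ Y}`. -/
def setSum {n : ℕ} (X Y : Set (Vec R n)) : Set (Vec R n) :=
  {z | ∃ x ∈ X, ∃ y ∈ Y, z = x ⊔ y}

/-- The max-plus sum of two subsets of `(R^n)²`. -/
def pairSum {n : ℕ} (X Y : Set (Vec R n × Vec R n)) : Set (Vec R n × Vec R n) :=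
  {z | ∃ x ∈ X, ∃ y ∈ Y, z = x ⊔ y}

/-- `W` is `(C,A)`-conditioned invariant: `A (W ∩ ker C) ⊆ W`. -/
def CondInv {n q : ℕ} (C : Matrix (Fin q) (Fin n) R) (A : Matrix (Fin n) (Fin n) R)
    (W : Set (Vec R n × Vec R n)) : Prop :=
  mapCong A (W ∩ kerM C) ⊆ W

/-- `X` is `(A,B)`-controlled invariant: `A X ⊆ X ⊕ Im B`. -/
def ContrInv {n q : ℕ} (A : Matrix (Fin n) (Fin n) R) (B : Matrix (Fin n) (Fin q) R)
    (X : Set (Vec R n)) : Prop :=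
  mapSet A X ⊆ setSum X (imM B)

/-- The max-plus scalar product `uᵗ v = ⊕_i u_i ⊙ v_i = max_i (u_i + v_i)`. -/
def dotMP {n : ℕ} (u v : Vec R n) : R := Finset.univ.sup fun i => u i + v i

/-- The orthogonal of a semimodule `X ⊆ R^n`:
`X^⊥ = {(x,y) : xᵗ z = yᵗ z, ∀ z ∈ X}`. -/
def orthS {n : ℕ} (X : Set (Vec R n)) : Set (Vec R n × Vec R n) :=
  {p | ∀ z ∈ X, dotMP p.1 z = dotMP p.2 z}

/-- The orthogonal of a congruence (or set of pairs) `W ⊆ (R^n)²`: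
`W^⊤ = {z : xᵗ z = yᵗ z, ∀ (x,y) ∈ W}`. -/
def orthC {n : ℕ} (W : Set (Vec R n × Vec R n)) : Set (Vec R n) :=
  {z | ∀ p ∈ W, dotMP p.1 z = dotMP p.2 z}

/-- The smallest congruence containing a set `S ⊆ (R^n)²`. -/
def spanCong {n : ℕ} (S : Set (Vec R n × Vec R n)) : Set (Vec R n × Vec R n) :=
  ⋂₀ {W | IsCongruence W ∧ S ⊆ W}

/-- The smallest semimodule containing a set `S ⊆ R^n`. -/
def spanSet {n : ℕ} (S : Set (Vec R n)) : Set (Vec R n) :=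
  ⋂₀ {K | IsSemimodule K ∧ S ⊆ K}

end Defs


/-! ### Auxiliary material for the proof -/

section AuxProof

/-- Translation by a real constant as an order isomorphism of `Rmax`. -/
def trIsoMP (r : ℝ) : Rmax ≃o Rmax where
  toFun a := (r : Rmax) + a
  invFun a := (↑(-r) : Rmax) + a
  left_inv a := by
    show (↑(-r) : Rmax) + ((r : Rmax) + a) = a
    rw [← add_assoc, ← WithBot.coe_add]; simp
  right_inv a := by
    show (r : Rmax) + ((↑(-r) : Rmax) + a) = a
    rw [← add_assoc, ← WithBot.coe_add]; simp
  map_rel_iff' := by intro a b; exact WithBot.add_le_add_iff_left (x := ((r : ℝ) : Rmax)) (by simp)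

theorem cont_addConstMP (c : Rmax) : Continuous fun a : Rmax => c + a := by
  induction c using WithBot.recBotCoe with
  | bot => simpa [WithBot.bot_add] using continuous_const
  | coe r => exact (trIsoMP r).continuous

theorem cont_supMP {ι X : Type*} [TopologicalSpace X] (s : Finset ι) (f : ι → X → Rmax)
    (hf : ∀ i, Continuous (f i)) :
    Continuous fun y => s.sup (fun i => f i y) := by
  classical
  induction s using Finset.induction with
  | empty => simpa using continuous_const
  | insert a s h ih => simp only [Finset.sup_insert]; exact (hf _).max ih

theorem cont_inf'MP {ι X : Type*} [TopologicalSpace X] (s : Finset ι) (hs : s.Nonempty)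
    (f : ι → X → Rmax) (hf : ∀ i, Continuous (f i)) :
    Continuous fun y => s.inf' hs (fun i => f i y) := by
  refine Finset.Nonempty.cons_induction
    (motive := fun s hs => Continuous fun y => s.inf' hs (fun i => f i y)) ?_ ?_ hs
  · intro a; simpa using hf a
  · intro a s ha hs ih
    simp only [Finset.inf'_cons (H := hs)]
    exact (hf _).min ih

theorem cont_mulVecMP {m n : ℕ} (A : Matrix (Fin m) (Fin n) Rmax) :
    Continuous (mulVecMP A) := by
  apply continuous_pi; intro i
  simp only [mulVecMP]
  exact cont_supMP _ _ fun k => (cont_addConstMP (A i k)).comp (continuous_apply k)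

/-- `subC c a` is the "residuated difference" `a - c` (only meaningful for `c ≠ ⊥`). -/
def subC (c a : Rmax) : Rmax :=
  WithBot.recBotCoe ⊥ (fun r => ((-r : ℝ) : Rmax) + a) c

theorem add_subC (r : ℝ) (a : Rmax) : (r : Rmax) + subC (r : Rmax) a = a := by
  show (r : Rmax) + (((-r : ℝ) : Rmax) + a) = a
  rw [← add_assoc, ← WithBot.coe_add]; simp

theorem le_subC (r : ℝ) (x a : Rmax) (h : (r : Rmax) + x ≤ a) : x ≤ subC (r : Rmax) a := by
  show x ≤ ((-r : ℝ) : Rmax) + a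
  calc x = ((-r : ℝ) : Rmax) + ((r : Rmax) + x) := by
        rw [← add_assoc, ← WithBot.coe_add]; simp
    _ ≤ _ := add_le_add_right h _

theorem cont_subC (c : Rmax) : Continuous (subC c) := by
  induction c using WithBot.recBotCoe with
  | bot => exact continuous_const
  | coe r => exact (trIsoMP (-r)).continuous

open Classical in
noncomputable def suppCol {n q : ℕ} (E : Matrix (Fin n) (Fin q) Rmax) (k : Fin q) :
    Finset (Fin n) :=
  Finset.univ.filter fun i => E i k ≠ ⊥

theorem mem_suppCol {n q : ℕ} (E : Matrix (Fin n) (Fin q) Rmax) (k : Fin q) (i : Fin n) :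
    i ∈ suppCol E k ↔ E i k ≠ ⊥ := by
  simp [suppCol]

/-- The residuation `E♯ y`, the largest `x` with `E x ≤ y`. -/
noncomputable def eSharp {n q : ℕ} (E : Matrix (Fin n) (Fin q) Rmax) (y : Vec Rmax n) :
    Vec Rmax q := fun k =>
  if h : (suppCol E k).Nonempty then (suppCol E k).inf' h (fun i => subC (E i k) (y i))
  else ⊥

theorem cont_eSharp {n q : ℕ} (E : Matrix (Fin n) (Fin q) Rmax) :
    Continuous (eSharp E) := by
  apply continuous_pi; intro k
  by_cases h : (suppCol E k).Nonempty
  · simp only [eSharp, dif_pos h]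
    exact cont_inf'MP _ h _ fun i => (cont_subC (E i k)).comp (continuous_apply i)
  · simp only [eSharp, dif_neg h]
    exact continuous_const

theorem eSharp_le {n q : ℕ} (E : Matrix (Fin n) (Fin q) Rmax) (y : Vec Rmax n) (i : Fin n) :
    mulVecMP E (eSharp E y) i ≤ y i := by
  simp only [mulVecMP]
  apply Finset.sup_le; intro k _
  by_cases hb : E i k = ⊥
  · simp [hb, WithBot.bot_add]
  · obtain ⟨r, hr⟩ := WithBot.ne_bot_iff_exists.mp hb
    have hi : i ∈ suppCol E k := (mem_suppCol E k i).mpr hb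
    have hne : (suppCol E k).Nonempty := ⟨i, hi⟩
    have h1 : eSharp E y k ≤ subC (E i k) (y i) := by
      simp only [eSharp, dif_pos hne]
      exact Finset.inf'_le _ hi
    calc E i k + eSharp E y k ≤ E i k + subC (E i k) (y i) := add_le_add_right h1 _
      _ = y i := by rw [← hr]; exact add_subC r (y i)

theorem le_eSharp_mulVec {n q : ℕ} (E : Matrix (Fin n) (Fin q) Rmax) (x : Vec Rmax q)
    (i : Fin n) : mulVecMP E x i ≤ mulVecMP E (eSharp E (mulVecMP E x)) i := by
  conv_lhs => simp only [mulVecMP]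
  apply Finset.sup_le; intro k _
  refine le_trans ?_ (Finset.le_sup (f := fun k => E i k + eSharp E (mulVecMP E x) k)
    (Finset.mem_univ k))
  by_cases hb : E i k = ⊥
  · simp [hb, WithBot.bot_add]
  · apply add_le_add_right
    have hi : i ∈ suppCol E k := (mem_suppCol E k i).mpr hb
    have hne : (suppCol E k).Nonempty := ⟨i, hi⟩
    simp only [eSharp, dif_pos hne]
    apply Finset.le_inf'
    intro j hj
    obtain ⟨s, hs⟩ := WithBot.ne_bot_iff_exists.mp ((mem_suppCol E k j).mp hj)
    rw [← hs]
    apply le_subC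
    rw [hs]
    exact Finset.le_sup (f := fun k' => E j k' + x k') (Finset.mem_univ k)

end AuxProof

/-- Every finitely generated subsemimodule of `ℝ_max^n`
(i.e. the image `Im E = {E x : x ∈ ℝ_max^q}` of a matrix
`E ∈ ℝ_max^{n×q}`) is closed in `ℝ_max^n`. -/

theorem finitely_generated_subsemimodules_are_closed
    {n q : ℕ} (E : Matrix (Fin n) (Fin q) Rmax) :
    IsClosed (imM E) := by
  have key : imM E = {y | mulVecMP E (eSharp E y) = y} := by
    ext y; constructor
    · rintro ⟨x, rfl⟩
      exact funext fun i =>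
        le_antisymm (eSharp_le E (mulVecMP E x) i) (le_eSharp_mulVec E x i)
    · intro h
      exact ⟨eSharp E y, h.symm⟩
  rw [key]
  exact isClosed_eq ((cont_mulVecMP E).comp (cont_eSharp E)) continuous_id
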